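/- Let X₁, …, X_k be i.i.d. points uniformly distributed in the n-dimensional unit ball. Then as n → ∞, the ratio of the maximum to the minimum pairwise Euclidean distance, max_{i<j} ‖Xᵢ−Xⱼ‖ / min_{i<j} ‖Xᵢ−Xⱼ‖, converges to 1 in probability, for any fixed k ≥ 2. -/

import Mathlib

open MeasureTheory ProbabilityTheory Filter Metric RealInnerProductSpace

/-- The ratio of the maximum to the minimum pairwise distance among the points
`x 0, …, x (k-1)`, the maximum and minimum being taken over pairs `i < j`. -/
noncomputable def pairwiseDistRatio {k : ℕ} (hk : 2 ≤ k) {E : Type*} [PseudoMetricSpace E]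
    (x : Fin k → E) : ℝ :=
  (Finset.sup' (Finset.univ.filter fun p : Fin k × Fin k => p.1 < p.2)
      ⟨(⟨0, by omega⟩, ⟨1, by omega⟩), by simp [Fin.mk_lt_mk]⟩
      fun p => dist (x p.1) (x p.2)) /
    (Finset.inf' (Finset.univ.filter fun p : Fin k × Fin k => p.1 < p.2)
      ⟨(⟨0, by omega⟩, ⟨1, by omega⟩), by simp [Fin.mk_lt_mk]⟩
      fun p => dist (x p.1) (x p.2))

noncomputable def unifBall (n : ℕ) : Measure (EuclideanSpace ℝ (Fin n)) :=
  (volume (closedBall (0 : EuclideanSpace ℝ (Fin n)) 1))⁻¹ •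
    volume.restrict (closedBall (0 : EuclideanSpace ℝ (Fin n)) 1)

lemma ballvol_pos (n : ℕ) : 0 < volume (closedBall (0 : EuclideanSpace ℝ (Fin n)) 1) :=
  lt_of_lt_of_le (measure_ball_pos _ _ one_pos) (measure_mono ball_subset_closedBall)

lemma ballvol_ne_top (n : ℕ) : volume (closedBall (0 : EuclideanSpace ℝ (Fin n)) 1) ≠ ⊤ :=
  measure_closedBall_lt_top.ne

instance unifBall_prob (n : ℕ) : IsProbabilityMeasure (unifBall n) := by
  constructor
  rw [unifBall, Measure.smul_apply, Measure.restrict_apply MeasurableSet.univ, Set.univ_inter,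
    smul_eq_mul, ENNReal.inv_mul_cancel (ballvol_pos n).ne' (ballvol_ne_top n)]

lemma unifBall_le {n : ℕ} {A : Set (EuclideanSpace ℝ (Fin n))} (hA : MeasurableSet A)
    {z : EuclideanSpace ℝ (Fin n)} {r : ℝ} (hr : 0 ≤ r)
    (h : A ∩ closedBall (0 : EuclideanSpace ℝ (Fin n)) 1 ⊆ closedBall z r) :
    unifBall n A ≤ ENNReal.ofReal (r ^ n) := by
  have hc := (ballvol_pos n).ne'
  have hc' := ballvol_ne_top n
  rw [unifBall, Measure.smul_apply, Measure.restrict_apply hA, smul_eq_mul]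
  calc (volume (closedBall (0 : EuclideanSpace ℝ (Fin n)) 1))⁻¹ *
        volume (A ∩ closedBall (0 : EuclideanSpace ℝ (Fin n)) 1)
      ≤ (volume (closedBall (0 : EuclideanSpace ℝ (Fin n)) 1))⁻¹ * volume (closedBall z r) := by
        exact mul_le_mul_right (measure_mono h) _
    _ = ENNReal.ofReal (r ^ n) := by
        rw [Measure.addHaar_closedBall' volume z hr, finrank_euclideanSpace_fin,
          ← mul_assoc, mul_comm _ (ENNReal.ofReal (r ^ n)), mul_assoc,
          mul_comm ((volume (closedBall (0 : EuclideanSpace ℝ (Fin n)) 1))⁻¹),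
          ENNReal.mul_inv_cancel hc hc', mul_one]
lemma unifBall_halfSlice {n : ℕ} {s : ℝ} (hs0 : 0 < s) (hs1 : s < 1)
    {u : EuclideanSpace ℝ (Fin n)} (hu : ‖u‖ = 1) :
    unifBall n {y | s < ⟪u, y⟫} ≤ ENNReal.ofReal ((Real.sqrt (1 - s ^ 2)) ^ n) := by
  refine unifBall_le (z := s • u)
    (isOpen_lt continuous_const (innerSL ℝ u).continuous).measurableSet
    (Real.sqrt_nonneg _) ?_
  rintro y ⟨hy, hyB⟩
  have hy' : s < ⟪u, y⟫ := hy
  have hyn : ‖y‖ ≤ 1 := mem_closedBall_zero_iff.1 hyB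
  have h2 : ‖y - s • u‖ ^ 2 ≤ 1 - s ^ 2 := by
    have e := norm_sub_sq_real y (s • u)
    rw [real_inner_smul_right, real_inner_comm u y, norm_smul, hu] at e
    have hyn0 : (0:ℝ) ≤ ‖y‖ := norm_nonneg _
    rw [Real.norm_eq_abs, abs_of_pos hs0] at e
    nlinarith [hy', hyn, hyn0]
  rw [mem_closedBall, dist_eq_norm]
  calc ‖y - s • u‖ = Real.sqrt (‖y - s • u‖ ^ 2) := (Real.sqrt_sq (norm_nonneg _)).symm
    _ ≤ Real.sqrt (1 - s ^ 2) := Real.sqrt_le_sqrt h2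

lemma unifBall_slice {n : ℕ} {s : ℝ} (hs0 : 0 < s) (hs1 : s < 1)
    {x : EuclideanSpace ℝ (Fin n)} (hx : ‖x‖ ≤ 1) :
    unifBall n {y | s < |⟪x, y⟫|} ≤ 2 * ENNReal.ofReal ((Real.sqrt (1 - s ^ 2)) ^ n) := by
  rcases eq_or_ne x 0 with rfl | hx0
  · have : {y : EuclideanSpace ℝ (Fin n) | s < |⟪(0 : EuclideanSpace ℝ (Fin n)), y⟫|} = ∅ := by
      ext y; simp [inner_zero_left, abs_zero, not_lt.2 hs0.le]
    rw [this]; simp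
  · set u : EuclideanSpace ℝ (Fin n) := ‖x‖⁻¹ • x with hu_def
    have hxn : 0 < ‖x‖ := norm_pos_iff.2 hx0
    have hu : ‖u‖ = 1 := by
      rw [hu_def, norm_smul, norm_inv, norm_norm, inv_mul_cancel₀ hxn.ne']
    have hnu : ‖-u‖ = 1 := by rw [norm_neg]; exact hu
    have hsub : {y : EuclideanSpace ℝ (Fin n) | s < |⟪x, y⟫|} ⊆
        {y | s < ⟪u, y⟫} ∪ {y | s < ⟪-u, y⟫} := by
      intro y hy
      have hy' : s < |⟪x, y⟫| := hy
      have hxy : ⟪x, y⟫ = ‖x‖ * ⟪u, y⟫ := by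
        rw [hu_def, real_inner_smul_left]
        field_simp
      have habs : |⟪x, y⟫| = ‖x‖ * |⟪u, y⟫| := by
        rw [hxy, abs_mul, abs_of_pos hxn]
      have h1 : s < |⟪u, y⟫| := by
        have hle : ‖x‖ * |⟪u, y⟫| ≤ |⟪u, y⟫| := by
          nlinarith [abs_nonneg (⟪u, y⟫)]
        calc s < |⟪x, y⟫| := hy'
          _ = ‖x‖ * |⟪u, y⟫| := habs
          _ ≤ |⟪u, y⟫| := hle
      rcases lt_abs.1 h1 with h | h
      · exact Or.inl h
      · refine Or.inr ?_
        show s < ⟪-u, y⟫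
        rw [inner_neg_left]
        linarith
    calc unifBall n {y | s < |⟪x, y⟫|}
        ≤ unifBall n ({y | s < ⟪u, y⟫} ∪ {y | s < ⟪-u, y⟫}) := measure_mono hsub
      _ ≤ unifBall n {y | s < ⟪u, y⟫} + unifBall n {y | s < ⟪-u, y⟫} := measure_union_le _ _
      _ ≤ ENNReal.ofReal ((Real.sqrt (1 - s ^ 2)) ^ n)
          + ENNReal.ofReal ((Real.sqrt (1 - s ^ 2)) ^ n) :=
        add_le_add (unifBall_halfSlice hs0 hs1 hu) (unifBall_halfSlice hs0 hs1 hnu)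
      _ = 2 * ENNReal.ofReal ((Real.sqrt (1 - s ^ 2)) ^ n) := (two_mul _).symm

lemma unifBall_normTail {n : ℕ} {s : ℝ} (hs0 : 0 < s) (hs1 : s < 1) :
    unifBall n {x | ‖x‖ < 1 - s} ≤ ENNReal.ofReal ((1 - s) ^ n) := by
  refine unifBall_le (z := 0)
    (isOpen_lt continuous_norm continuous_const).measurableSet (by linarith) ?_
  rintro x ⟨hx, _⟩
  exact mem_closedBall_zero_iff.2 (le_of_lt hx)

lemma unifBall_prod_slice {n : ℕ} {s : ℝ} (hs0 : 0 < s) (hs1 : s < 1) :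
    ((unifBall n).prod (unifBall n))
        {p : EuclideanSpace ℝ (Fin n) × EuclideanSpace ℝ (Fin n) | s < |⟪p.1, p.2⟫|} ≤
      2 * ENNReal.ofReal ((Real.sqrt (1 - s ^ 2)) ^ n) := by
  have hSmeas : MeasurableSet
      {p : EuclideanSpace ℝ (Fin n) × EuclideanSpace ℝ (Fin n) | s < |⟪p.1, p.2⟫|} :=
    (isOpen_lt continuous_const continuous_inner.abs).measurableSet
  rw [Measure.prod_apply hSmeas]
  have hae : ∀ᵐ x ∂(unifBall n), ‖x‖ ≤ 1 := by
    rw [ae_iff]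
    have hms : MeasurableSet {x : EuclideanSpace ℝ (Fin n) | ¬ ‖x‖ ≤ 1} :=
      (measurableSet_le measurable_norm measurable_const).compl
    rw [unifBall, Measure.smul_apply, Measure.restrict_apply hms]
    have : {x : EuclideanSpace ℝ (Fin n) | ¬ ‖x‖ ≤ 1} ∩ closedBall 0 1 = ∅ := by
      ext x
      simp only [Set.mem_inter_iff, Set.mem_setOf_eq, mem_closedBall_zero_iff, Set.mem_empty_iff_false]
      tauto
    rw [this, measure_empty, smul_eq_mul, mul_zero]
  calc ∫⁻ x, unifBall n (Prod.mk x ⁻¹'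
        {p : EuclideanSpace ℝ (Fin n) × EuclideanSpace ℝ (Fin n) | s < |⟪p.1, p.2⟫|}) ∂(unifBall n)
      ≤ ∫⁻ _, 2 * ENNReal.ofReal ((Real.sqrt (1 - s ^ 2)) ^ n) ∂(unifBall n) := by
        refine lintegral_mono_ae (hae.mono fun x hx => ?_)
        have : Prod.mk x ⁻¹'
            {p : EuclideanSpace ℝ (Fin n) × EuclideanSpace ℝ (Fin n) | s < |⟪p.1, p.2⟫|} =
            {y | s < |⟪x, y⟫|} := rfl
        rw [this]
        exact unifBall_slice hs0 hs1 hx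
    _ = 2 * ENNReal.ofReal ((Real.sqrt (1 - s ^ 2)) ^ n) := by
        rw [lintegral_const, measure_univ, mul_one]

lemma unifBall_outside {n : ℕ} : unifBall n {x : EuclideanSpace ℝ (Fin n) | 1 < ‖x‖} = 0 := by
  have hms : MeasurableSet {x : EuclideanSpace ℝ (Fin n) | 1 < ‖x‖} :=
    (isOpen_lt continuous_const continuous_norm).measurableSet
  rw [unifBall, Measure.smul_apply, Measure.restrict_apply hms]
  have : {x : EuclideanSpace ℝ (Fin n) | 1 < ‖x‖} ∩ closedBall 0 1 = ∅ := by
    ext x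
    simp only [Set.mem_inter_iff, Set.mem_setOf_eq, mem_closedBall_zero_iff,
      Set.mem_empty_iff_false, iff_false, not_and]
    intro h1 h2
    linarith
  rw [this, measure_empty, smul_eq_mul, mul_zero]

lemma dist_sq_bounds {n : ℕ} {s : ℝ} (hs0 : 0 < s) (hs1 : s < 1)
    (x y : EuclideanSpace ℝ (Fin n))
    (hx1 : 1 - s ≤ ‖x‖) (hx2 : ‖x‖ ≤ 1) (hy1 : 1 - s ≤ ‖y‖) (hy2 : ‖y‖ ≤ 1)
    (hxy : |⟪x, y⟫| ≤ s) :
    2 - 6 * s ≤ dist x y ^ 2 ∧ dist x y ^ 2 ≤ 2 + 6 * s := by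
  rw [dist_eq_norm]
  have e := norm_sub_sq_real x y
  have habs := abs_le.1 hxy
  constructor <;> nlinarith [habs.1, habs.2, norm_nonneg x, norm_nonneg y]

lemma ratio_close {k : ℕ} (hk : 2 ≤ k) {E' : Type*} [PseudoMetricSpace E'] (x : Fin k → E')
    {δ : ℝ} (hδ0 : 0 < δ) (hδ1 : δ ≤ 1)
    (h : ∀ p : Fin k × Fin k, p.1 < p.2 →
      2 - δ ≤ dist (x p.1) (x p.2) ^ 2 ∧ dist (x p.1) (x p.2) ^ 2 ≤ 2 + δ) :
    |pairwiseDistRatio hk x - 1| ≤ δ := by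
  have hne : (Finset.univ.filter fun p : Fin k × Fin k => p.1 < p.2).Nonempty :=
    ⟨(⟨0, by omega⟩, ⟨1, by omega⟩), by simp [Fin.mk_lt_mk]⟩
  set M := Finset.sup' _ hne (fun p : Fin k × Fin k => dist (x p.1) (x p.2)) with hM_def
  set m := Finset.inf' _ hne (fun p : Fin k × Fin k => dist (x p.1) (x p.2)) with hm_def
  have hrep : pairwiseDistRatio hk x = M / m := rfl
  set a := Real.sqrt (2 - δ) with ha_def
  set b := Real.sqrt (2 + δ) with hb_def
  have ha0 : 0 < a := Real.sqrt_pos.2 (by linarith)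
  have hbounds : ∀ p ∈ Finset.univ.filter fun p : Fin k × Fin k => p.1 < p.2,
      a ≤ dist (x p.1) (x p.2) ∧ dist (x p.1) (x p.2) ≤ b := by
    intro p hp
    obtain ⟨h1, h2⟩ := h p (Finset.mem_filter.1 hp).2
    constructor
    · calc a ≤ Real.sqrt (dist (x p.1) (x p.2) ^ 2) := Real.sqrt_le_sqrt h1
        _ = dist (x p.1) (x p.2) := Real.sqrt_sq dist_nonneg
    · calc dist (x p.1) (x p.2) = Real.sqrt (dist (x p.1) (x p.2) ^ 2) :=
          (Real.sqrt_sq dist_nonneg).symm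
        _ ≤ b := Real.sqrt_le_sqrt h2
  have hm : a ≤ m := Finset.le_inf' hne _ fun p hp => (hbounds p hp).1
  have hM : M ≤ b := Finset.sup'_le hne _ fun p hp => (hbounds p hp).2
  obtain ⟨p₀, hp₀⟩ := hne
  have hmM : m ≤ M := by
    refine le_trans (Finset.inf'_le _ hp₀) ?_
    exact Finset.le_sup' (fun p : Fin k × Fin k => dist (x p.1) (x p.2)) hp₀
  have hm0 : 0 < m := lt_of_lt_of_le ha0 hm
  have hba : b ≤ (1 + δ) * a := by
    have ha2 : a ^ 2 = 2 - δ := Real.sq_sqrt (by linarith)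
    have h1 : 2 + δ ≤ ((1 + δ) * a) ^ 2 := by
      have expand : ((1 + δ) * a) ^ 2 = (1 + δ) ^ 2 * (2 - δ) := by rw [mul_pow, ha2]
      rw [expand]; nlinarith [hδ0, hδ1, mul_pos hδ0 hδ0]
    calc b ≤ Real.sqrt (((1 + δ) * a) ^ 2) := Real.sqrt_le_sqrt h1
      _ = (1 + δ) * a := Real.sqrt_sq (by positivity)
  have hratio_le : M / m ≤ 1 + δ := by
    rw [div_le_iff₀ hm0]
    calc M ≤ b := hM
      _ ≤ (1 + δ) * a := hba
      _ ≤ (1 + δ) * m := by nlinarith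
  have hratio_ge : 1 ≤ M / m := (one_le_div hm0).2 hmM
  rw [hrep, abs_le]
  constructor <;> linarith

/-- Distance concentration in high dimensions: if `X₁, …, X_k` are i.i.d. uniform in the
`n`-dimensional unit ball, then as `n → ∞` the ratio of the maximum to the minimum pairwise
Euclidean distance converges to `1` in probability, for any fixed `k ≥ 2`. -/
theorem pairwise_dist_ratio_tendsto_one
    {k : ℕ} (hk : 2 ≤ k)
    (Ω : ℕ → Type*) (mΩ : ∀ n, MeasurableSpace (Ω n))
    (P : ∀ n, Measure (Ω n)) (hP : ∀ n, IsProbabilityMeasure (P n))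
    (X : ∀ n, Fin k → Ω n → EuclideanSpace ℝ (Fin n))
    (hmeas : ∀ n i, Measurable (X n i))
    (hindep : ∀ n, iIndepFun (X n) (P n))
    (hunif : ∀ n i,
      (P n).map (X n i) =
        (volume (Metric.closedBall (0 : EuclideanSpace ℝ (Fin n)) 1))⁻¹ •
          volume.restrict (Metric.closedBall (0 : EuclideanSpace ℝ (Fin n)) 1)) :
    ∀ ε > (0 : ℝ),
      Tendsto (fun n : ℕ =>
          P n {ω | ε < |pairwiseDistRatio hk (fun i => X n i ω) - 1|})
        atTop (nhds 0) := by
  intro ε hε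
  set δ : ℝ := min 1 ε with hδ_def
  have hδ0 : 0 < δ := lt_min one_pos hε
  have hδ1 : δ ≤ 1 := min_le_left _ _
  have hδε : δ ≤ ε := min_le_right _ _
  set s : ℝ := δ / 6 with hs_def
  have hs0 : 0 < s := by positivity
  have hs1 : s < 1 := by rw [hs_def]; linarith
  have h6s : 6 * s = δ := by rw [hs_def]; ring
  set r : ℝ := Real.sqrt (1 - s ^ 2) with hr_def
  have hr0 : 0 ≤ r := Real.sqrt_nonneg _
  have hr1 : r < 1 := by
    rw [hr_def]
    calc Real.sqrt (1 - s ^ 2) < Real.sqrt 1 := by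
          apply Real.sqrt_lt_sqrt (by nlinarith) (by nlinarith)
      _ = 1 := Real.sqrt_one
  have h1s0 : 0 ≤ 1 - s := by linarith
  have h1s1 : 1 - s < 1 := by linarith
  set pairs := Finset.univ.filter (fun p : Fin k × Fin k => p.1 < p.2) with hpairs_def
  have law : ∀ n i, (P n).map (X n i) = unifBall n := fun n i => hunif n i
  have key : ∀ n, P n {ω | ε < |pairwiseDistRatio hk (fun i => X n i ω) - 1|}
      ≤ (pairs.card : ENNReal) *
        (2 * ENNReal.ofReal ((1 - s) ^ n) + 2 * ENNReal.ofReal (r ^ n)) := by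
    intro n
    set Bad : Fin k × Fin k → Set (Ω n) := fun p =>
      ({ω | ‖X n p.1 ω‖ < 1 - s} ∪ {ω | 1 < ‖X n p.1 ω‖}) ∪
      (({ω | ‖X n p.2 ω‖ < 1 - s} ∪ {ω | 1 < ‖X n p.2 ω‖}) ∪
        {ω | s < |⟪X n p.1 ω, X n p.2 ω⟫|}) with hBad_def
    have hincl : {ω | ε < |pairwiseDistRatio hk (fun i => X n i ω) - 1|} ⊆
        ⋃ p ∈ pairs, Bad p := by
      intro ω hω
      by_contra hcon
      simp only [Set.mem_iUnion, exists_prop, not_exists, not_and] at hcon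
      have hgood : ∀ p : Fin k × Fin k, p.1 < p.2 →
          2 - δ ≤ dist (X n p.1 ω) (X n p.2 ω) ^ 2 ∧
            dist (X n p.1 ω) (X n p.2 ω) ^ 2 ≤ 2 + δ := by
        intro p hp
        have hmem : p ∈ pairs := by
          rw [hpairs_def, Finset.mem_filter]
          exact ⟨Finset.mem_univ _, hp⟩
        have hnb : ω ∉ Bad p := hcon p hmem
        rw [hBad_def] at hnb
        simp only [Set.mem_union, Set.mem_setOf_eq, not_or, not_lt] at hnb
        obtain ⟨⟨h1, h2⟩, ⟨h3, h4⟩, h5⟩ := hnb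
        have hb := dist_sq_bounds hs0 hs1 (X n p.1 ω) (X n p.2 ω)
          h1 h2 h3 h4 h5
        rw [h6s] at hb
        exact hb
      have hclose := ratio_close hk (fun i => X n i ω) hδ0 hδ1 hgood
      have hω' : ε < |pairwiseDistRatio hk (fun i => X n i ω) - 1| := hω
      linarith
    have hperpair : ∀ p ∈ pairs, P n (Bad p) ≤
        2 * ENNReal.ofReal ((1 - s) ^ n) + 2 * ENNReal.ofReal (r ^ n) := by
      intro p hp
      have hplt : p.1 < p.2 := (Finset.mem_filter.1 hp).2
      have hpne : p.1 ≠ p.2 := ne_of_lt hplt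
      have hSm1 : MeasurableSet {x : EuclideanSpace ℝ (Fin n) | ‖x‖ < 1 - s} :=
        (isOpen_lt continuous_norm continuous_const).measurableSet
      have hSm2 : MeasurableSet {x : EuclideanSpace ℝ (Fin n) | 1 < ‖x‖} :=
        (isOpen_lt continuous_const continuous_norm).measurableSet
      have e1 : ∀ i, P n {ω | ‖X n i ω‖ < 1 - s} ≤ ENNReal.ofReal ((1 - s) ^ n) := by
        intro i
        have : P n {ω | ‖X n i ω‖ < 1 - s} = unifBall n {x | ‖x‖ < 1 - s} := by
          rw [← law n i, Measure.map_apply (hmeas n i) hSm1]; rfl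
        rw [this]
        exact unifBall_normTail hs0 hs1
      have e2 : ∀ i, P n {ω | 1 < ‖X n i ω‖} = 0 := by
        intro i
        have : P n {ω | 1 < ‖X n i ω‖} = unifBall n {x | 1 < ‖x‖} := by
          rw [← law n i, Measure.map_apply (hmeas n i) hSm2]; rfl
        rw [this]
        exact unifBall_outside
      have e3 : P n {ω | s < |⟪X n p.1 ω, X n p.2 ω⟫|} ≤
          2 * ENNReal.ofReal (r ^ n) := by
        have hprod := ((indepFun_iff_map_prod_eq_prod_map_map
          (hmeas n p.1).aemeasurable (hmeas n p.2).aemeasurable).1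
          ((hindep n).indepFun hpne))
        have hSm : MeasurableSet {q : EuclideanSpace ℝ (Fin n) × EuclideanSpace ℝ (Fin n) |
            s < |⟪q.1, q.2⟫|} :=
          (isOpen_lt continuous_const continuous_inner.abs).measurableSet
        have step : P n {ω | s < |⟪X n p.1 ω, X n p.2 ω⟫|} =
            (((P n).map (X n p.1)).prod ((P n).map (X n p.2)))
              {q : EuclideanSpace ℝ (Fin n) × EuclideanSpace ℝ (Fin n) | s < |⟪q.1, q.2⟫|} := by
          rw [← hprod, Measure.map_apply ((hmeas n p.1).prodMk (hmeas n p.2)) hSm]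
          rfl
        rw [step, law n p.1, law n p.2, hr_def]
        exact unifBall_prod_slice hs0 hs1
      calc P n (Bad p)
          ≤ P n ({ω | ‖X n p.1 ω‖ < 1 - s} ∪ {ω | 1 < ‖X n p.1 ω‖}) +
            P n (({ω | ‖X n p.2 ω‖ < 1 - s} ∪ {ω | 1 < ‖X n p.2 ω‖}) ∪
              {ω | s < |⟪X n p.1 ω, X n p.2 ω⟫|}) := measure_union_le _ _
        _ ≤ (P n {ω | ‖X n p.1 ω‖ < 1 - s} + P n {ω | 1 < ‖X n p.1 ω‖}) +
            ((P n {ω | ‖X n p.2 ω‖ < 1 - s} + P n {ω | 1 < ‖X n p.2 ω‖}) +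
              P n {ω | s < |⟪X n p.1 ω, X n p.2 ω⟫|}) := by
            refine add_le_add (measure_union_le _ _) ?_
            exact le_trans (measure_union_le _ _) (add_le_add (measure_union_le _ _) le_rfl)
        _ ≤ (ENNReal.ofReal ((1 - s) ^ n) + 0) +
            ((ENNReal.ofReal ((1 - s) ^ n) + 0) + 2 * ENNReal.ofReal (r ^ n)) := by
            refine add_le_add (add_le_add (e1 p.1) (e2 p.1).le) ?_
            exact add_le_add (add_le_add (e1 p.2) (e2 p.2).le) e3
        _ = 2 * ENNReal.ofReal ((1 - s) ^ n) + 2 * ENNReal.ofReal (r ^ n) := by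
            ring
    calc P n {ω | ε < |pairwiseDistRatio hk (fun i => X n i ω) - 1|}
        ≤ P n (⋃ p ∈ pairs, Bad p) := measure_mono hincl
      _ ≤ ∑ p ∈ pairs, P n (Bad p) := measure_biUnion_finset_le _ _
      _ ≤ ∑ _p ∈ pairs,
            (2 * ENNReal.ofReal ((1 - s) ^ n) + 2 * ENNReal.ofReal (r ^ n)) :=
          Finset.sum_le_sum hperpair
      _ = (pairs.card : ENNReal) *
            (2 * ENNReal.ofReal ((1 - s) ^ n) + 2 * ENNReal.ofReal (r ^ n)) := by
          rw [Finset.sum_const, nsmul_eq_mul]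
  have hu : Tendsto (fun n : ℕ => ENNReal.ofReal ((1 - s) ^ n)) atTop (nhds 0) := by
    have h := tendsto_pow_atTop_nhds_zero_of_lt_one h1s0 h1s1
    simpa using ENNReal.tendsto_ofReal h
  have hv : Tendsto (fun n : ℕ => ENNReal.ofReal (r ^ n)) atTop (nhds 0) := by
    have h := tendsto_pow_atTop_nhds_zero_of_lt_one hr0 hr1
    simpa using ENNReal.tendsto_ofReal h
  have hsum : Tendsto (fun n : ℕ =>
      (pairs.card : ENNReal) *
        (2 * ENNReal.ofReal ((1 - s) ^ n) + 2 * ENNReal.ofReal (r ^ n)))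
      atTop (nhds 0) := by
    have h2u := ENNReal.Tendsto.const_mul hu (Or.inr (by simp : (2 : ENNReal) ≠ ⊤))
    have h2v := ENNReal.Tendsto.const_mul hv (Or.inr (by simp : (2 : ENNReal) ≠ ⊤))
    have hadd := Filter.Tendsto.add h2u h2v
    simp only [mul_zero, add_zero] at hadd
    have := ENNReal.Tendsto.const_mul hadd
      (Or.inr (ENNReal.natCast_ne_top pairs.card))
    simpa using this
  exact tendsto_of_tendsto_of_tendsto_of_le_of_le tendsto_const_nhds hsum
    (fun n => zero_le) key
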